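/- (Geodesic convexity of the operator capacity objective.) Let A₁, …, A_m be n×n real matrices and define T(X) = Σⱼ Aⱼ·X·Aⱼᵀ; assume T is strictly positive, i.e., T(X) is positive definite whenever X is positive definite. Then the objective X ↦ log det(T(X)) − log det(X) of the operator capacity problem cap(T) = inf_{X ≻ 0} det(T(X))/det(X) is geodesically convex on the positive definite cone: for every n×n positive definite matrix P and every n×n symmetric matrix Q, the function t ↦ log det(T(√P · exp(t·Q) · √P)) − log det(√P · exp(t·Q) · √P) is convex on ℝ. -/

import Mathlib

open Matrix

open scoped ComplexOrder in
/-- The square root of a positive semidefinite matrix, as defined in Mathlib (Dec 2024). -/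
noncomputable def Matrix.PosSemidef.sqrt {𝕜 : Type*} [RCLike 𝕜] {n : Type*} [Fintype n]
    [DecidableEq n] {A : Matrix n n 𝕜} (hA : A.PosSemidef) : Matrix n n 𝕜 :=
  hA.1.eigenvectorUnitary.1 * diagonal ((↑) ∘ (√·) ∘ hA.1.eigenvalues) *
    (star hA.1.eigenvectorUnitary : Matrix n n 𝕜)

open scoped ComplexOrder in
lemma Matrix.PosSemidef.posSemidef_sqrt {𝕜 : Type*} [RCLike 𝕜] {n : Type*} [Fintype n]
    [DecidableEq n] {A : Matrix n n 𝕜} (hA : A.PosSemidef) : hA.sqrt.PosSemidef := by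
  unfold Matrix.PosSemidef.sqrt
  rw [Matrix.star_eq_conjTranspose]
  apply PosSemidef.mul_mul_conjTranspose_same
  rw [posSemidef_diagonal_iff]
  intro i
  simp only [Function.comp_apply]
  exact RCLike.ofReal_nonneg.mpr (Real.sqrt_nonneg _)

open scoped ComplexOrder in
lemma Matrix.PosSemidef.sqrt_mul_self {𝕜 : Type*} [RCLike 𝕜] {n : Type*} [Fintype n]
    [DecidableEq n] {A : Matrix n n 𝕜} (hA : A.PosSemidef) : hA.sqrt * hA.sqrt = A := by
  have hU : (star hA.1.eigenvectorUnitary : Matrix n n 𝕜) *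
      (hA.1.eigenvectorUnitary : Matrix n n 𝕜) = 1 :=
    Unitary.coe_star_mul_self _
  unfold Matrix.PosSemidef.sqrt
  conv_rhs => rw [hA.1.spectral_theorem, Unitary.conjStarAlgAut_apply]
  calc _ = (hA.1.eigenvectorUnitary : Matrix n n 𝕜) *
        (diagonal ((↑) ∘ (√·) ∘ hA.1.eigenvalues) *
          ((star hA.1.eigenvectorUnitary : Matrix n n 𝕜) *
            (hA.1.eigenvectorUnitary : Matrix n n 𝕜)) *
          diagonal ((↑) ∘ (√·) ∘ hA.1.eigenvalues)) *
        (star hA.1.eigenvectorUnitary : Matrix n n 𝕜) := by simp only [Matrix.mul_assoc]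
    _ = _ := by
      rw [hU, Matrix.mul_one, diagonal_mul_diagonal]
      congr 3
      funext i
      simp only [Function.comp_apply]
      rw [← RCLike.ofReal_mul, Real.mul_self_sqrt (hA.eigenvalues_nonneg i)]

variable {k : Type*} [Fintype k] [DecidableEq k]

lemma real_conjTranspose_eq_transpose {a b : Type*} (M : Matrix a b ℝ) : Mᴴ = Mᵀ := by
  ext i j; simp [conjTranspose_apply]

lemma psd_det_nonneg {M : Matrix k k ℝ} (h : M.PosSemidef) : 0 ≤ M.det := by
  rw [h.1.det_eq_prod_eigenvalues]
  exact Finset.prod_nonneg fun i _ => by simpa using h.eigenvalues_nonneg i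

lemma one_le_det_one_add {W : Matrix k k ℝ} (hW : W.PosSemidef) : 1 ≤ (1 + W).det := by
  have hH := hW.1
  set U : Matrix k k ℝ := (hH.eigenvectorUnitary : Matrix k k ℝ)
  have hU : U * star U = 1 := Matrix.mem_unitaryGroup_iff.mp hH.eigenvectorUnitary.2
  have hU' : star U * U = 1 := Matrix.mem_unitaryGroup_iff'.mp hH.eigenvectorUnitary.2
  have key : 1 + W = U * (1 + diagonal (RCLike.ofReal ∘ hH.eigenvalues)) * star U := by
    rw [mul_add, add_mul, mul_one, hU]
    conv_lhs => rw [hH.spectral_theorem]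
    rw [Unitary.conjStarAlgAut_apply]
  have hdetU : U.det * (star U).det = 1 := by rw [← det_mul, hU, det_one]
  rw [key, det_mul, det_mul]
  have : (1 : Matrix k k ℝ) + diagonal (RCLike.ofReal ∘ hH.eigenvalues)
      = diagonal (fun i => 1 + hH.eigenvalues i) := by
    rw [← diagonal_one, diagonal_add]
    rfl
  rw [this, det_diagonal]
  have h1 : (1:ℝ) ≤ ∏ i, (1 + hH.eigenvalues i) := by
    calc (1:ℝ) = ∏ _i : k, (1:ℝ) := by simp
    _ ≤ ∏ i, (1 + hH.eigenvalues i) :=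
        Finset.prod_le_prod (by simp) fun i _ =>
          le_add_of_nonneg_right (hW.eigenvalues_nonneg i)
  rw [mul_right_comm, hdetU, one_mul]
  exact h1

lemma det_le_det_add {S E : Matrix k k ℝ} (hS : S.PosSemidef) (hE : E.PosSemidef) :
    S.det ≤ (S + E).det := by
  by_cases hdet : IsUnit S.det
  · set R := hS.sqrt with hRdef
    have hRR : R * R = S := hS.sqrt_mul_self
    have hdetR : IsUnit R.det := by
      have : R.det * R.det = S.det := by rw [← det_mul, hRR]
      exact isUnit_of_mul_isUnit_left (this ▸ hdet)
    have hRinv : R * R⁻¹ = 1 := mul_nonsing_inv R hdetR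
    have hRinv' : R⁻¹ * R = 1 := nonsing_inv_mul R hdetR
    have hRiH : (R⁻¹)ᴴ = R⁻¹ := (hS.posSemidef_sqrt.inv).1
    have hW : ((R⁻¹)ᴴ * E * R⁻¹).PosSemidef := hE.conjTranspose_mul_mul_same R⁻¹
    rw [hRiH] at hW
    have key : S + E = R * (1 + R⁻¹ * E * R⁻¹) * R := by
      rw [mul_add, add_mul, mul_one, hRR]
      congr 1
      calc E = (R * R⁻¹) * E * (R⁻¹ * R) := by
            rw [hRinv, hRinv', Matrix.one_mul, Matrix.mul_one]
        _ = R * (R⁻¹ * E * R⁻¹) * R := by simp only [Matrix.mul_assoc]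
    rw [key, det_mul, det_mul]
    have h1 : (1:ℝ) ≤ (1 + R⁻¹ * E * R⁻¹).det := one_le_det_one_add hW
    have hdS : S.det = R.det * R.det := by rw [← det_mul, hRR]
    have hdRnn : 0 ≤ R.det := psd_det_nonneg hS.posSemidef_sqrt
    calc S.det = R.det * 1 * R.det := by rw [mul_one, ← hdS]
      _ ≤ R.det * (1 + R⁻¹ * E * R⁻¹).det * R.det := by
          apply mul_le_mul_of_nonneg_right _ hdRnn
          exact mul_le_mul_of_nonneg_left h1 hdRnn
  · have h0 : S.det = 0 := by
      by_contra h; exact hdet (isUnit_iff_ne_zero.mpr h)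
    rw [h0]
    exact psd_det_nonneg (hS.add hE)

lemma posDef_mul_transpose_self {B : Matrix k k ℝ} (hB : IsUnit B.det) :
    (B * Bᵀ).PosDef := by
  have hpsd : (B * Bᵀ).PosSemidef := by
    have := posSemidef_self_mul_conjTranspose B
    rwa [real_conjTranspose_eq_transpose] at this
  refine PosDef.of_dotProduct_mulVec_pos hpsd.1 fun x hx => ?_
  have hy : Bᵀ *ᵥ x ≠ 0 := by
    intro h
    apply hx
    have hBT : IsUnit Bᵀ.det := by rwa [det_transpose]
    have := congrArg (fun v => (Bᵀ)⁻¹ *ᵥ v) h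
    simpa [Matrix.mulVec_mulVec, nonsing_inv_mul _ hBT] using this
  set y := Bᵀ *ᵥ x with hydef
  have hcalc : star x ⬝ᵥ ((B * Bᵀ) *ᵥ x) = y ⬝ᵥ y := by
    rw [show (star x) = x from rfl, ← Matrix.mulVec_mulVec, dotProduct_mulVec,
      hydef, Matrix.mulVec_transpose]
  rw [hcalc]
  obtain ⟨i, hi⟩ := Function.ne_iff.mp hy
  have h1 : ∀ j ∈ Finset.univ, (0:ℝ) ≤ y j * y j := fun j _ => mul_self_nonneg _
  have h2 : ∃ j ∈ (Finset.univ : Finset k), 0 < y j * y j :=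
    ⟨i, Finset.mem_univ i, mul_self_pos.mpr hi⟩
  simpa [dotProduct] using Finset.sum_pos' h1 h2

lemma det_sq_le {N : Type*} [Fintype N] (X Y : Matrix N k ℝ)
    (hX : (Xᵀ * X).PosDef) (hY : (Yᵀ * Y).PosDef) :
    ((Xᵀ * Y).det) ^ 2 ≤ (Xᵀ * X).det * (Yᵀ * Y).det := by
  set Z : Matrix N (k ⊕ k) ℝ := fromCols X Y with hZ
  have hpsdZ : (Zᴴ * Z).PosSemidef := posSemidef_conjTranspose_mul_self Z
  rw [real_conjTranspose_eq_transpose, hZ, transpose_fromCols,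
    fromRows_mul_fromCols] at hpsdZ
  have hBH : (Xᵀ * Y)ᴴ = Yᵀ * X := by
    rw [real_conjTranspose_eq_transpose, transpose_mul, transpose_transpose]
  rw [← hBH] at hpsdZ
  haveI : Invertible (Xᵀ * X) :=
    invertibleOfIsUnitDet _ (isUnit_iff_ne_zero.mpr hX.det_pos.ne')
  have hschur := (PosDef.fromBlocks₁₁ (Xᵀ * Y) (Yᵀ * Y) hX).mp hpsdZ
  have hNpsd : ((Xᵀ * Y)ᴴ * (Xᵀ * X)⁻¹ * (Xᵀ * Y)).PosSemidef :=
    (hX.posSemidef.inv).conjTranspose_mul_mul_same (Xᵀ * Y)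
  have hmono := det_le_det_add hNpsd hschur
  rw [add_sub_cancel] at hmono
  have hdetN : ((Xᵀ * Y)ᴴ * (Xᵀ * X)⁻¹ * (Xᵀ * Y)).det
      = (Xᵀ * Y).det ^ 2 * ((Xᵀ * X).det)⁻¹ := by
    rw [det_mul, det_mul, det_conjTranspose, det_nonsing_inv]
    simp [Ring.inverse_eq_inv']
    ring
  rw [hdetN] at hmono
  have hA : 0 < (Xᵀ * X).det := hX.det_pos
  calc ((Xᵀ * Y).det) ^ 2 = ((Xᵀ * Y).det ^ 2 * ((Xᵀ * X).det)⁻¹) * (Xᵀ * X).det := by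
        field_simp
    _ ≤ (Yᵀ * Y).det * (Xᵀ * X).det := mul_le_mul_of_nonneg_right hmono hA.le
    _ = (Xᵀ * X).det * (Yᵀ * Y).det := mul_comm _ _

lemma convexOn_univ_of_continuous_of_midpoint {f : ℝ → ℝ} (hc : Continuous f)
    (hm : ∀ x y : ℝ, f ((x + y) / 2) ≤ (f x + f y) / 2) :
    ConvexOn ℝ Set.univ f := by
  refine ⟨convex_univ, fun x _ y _ a b ha hb hab => ?_⟩
  -- reduce to: ∀ a ∈ [0,1], f (a*x + (1-a)*y) ≤ a * f x + (1-a) * f y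
  set S : Set ℝ := {c | c ∈ Set.Icc (0:ℝ) 1 ∧ f (c * x + (1 - c) * y) ≤ c * f x + (1 - c) * f y}
    with hSdef
  have hSclosed : IsClosed S := by
    have h1 : IsClosed (Set.Icc (0:ℝ) 1) := isClosed_Icc
    have h2 : IsClosed {c : ℝ | f (c * x + (1 - c) * y) ≤ c * f x + (1 - c) * f y} := by
      apply isClosed_le
      · exact hc.comp (by continuity)
      · continuity
    exact h1.inter h2
  have hmid : ∀ c d : ℝ, c ∈ S → d ∈ S → (c + d) / 2 ∈ S := by
    rintro c d ⟨⟨hc0, hc1⟩, hcf⟩ ⟨⟨hd0, hd1⟩, hdf⟩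
    refine ⟨⟨by linarith, by linarith⟩, ?_⟩
    have harg : ((c + d) / 2) * x + (1 - (c + d) / 2) * y
        = ((c * x + (1 - c) * y) + (d * x + (1 - d) * y)) / 2 := by ring
    rw [harg]
    calc f (((c * x + (1 - c) * y) + (d * x + (1 - d) * y)) / 2)
        ≤ (f (c * x + (1 - c) * y) + f (d * x + (1 - d) * y)) / 2 := hm _ _
      _ ≤ ((c * f x + (1 - c) * f y) + (d * f x + (1 - d) * f y)) / 2 := by linarith
      _ = ((c + d) / 2) * f x + (1 - (c + d) / 2) * f y := by ring
  have h0S : (0:ℝ) ∈ S := ⟨⟨le_refl 0, zero_le_one⟩, by norm_num⟩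
  have h1S : (1:ℝ) ∈ S := ⟨⟨zero_le_one, le_refl 1⟩, by norm_num⟩
  have hdyadic : ∀ N : ℕ, ∀ j : ℕ, j ≤ 2 ^ N → ((j : ℝ) / 2 ^ N) ∈ S := by
    intro N
    induction N with
    | zero =>
      intro j hj
      interval_cases j
      · simpa using h0S
      · simpa using h1S
    | succ N ih =>
      intro j hj
      rcases Nat.even_or_odd j with ⟨i, hi⟩ | ⟨i, hi⟩
      · subst hi
        have hi2 : i ≤ 2 ^ N := by
          have h2 : 2 ^ (N + 1) = 2 * 2 ^ N := by ring
          omega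
        have : ((i + i : ℕ) : ℝ) / 2 ^ (N + 1) = (i : ℝ) / 2 ^ N := by
          push_cast
          rw [pow_succ]
          field_simp
          ring
        rw [this]
        exact ih i hi2
      · subst hi
        have hpow2 : 2 ^ (N + 1) = 2 * 2 ^ N := by ring
        have hi1 : i ≤ 2 ^ N := by omega
        have hi2 : i + 1 ≤ 2 ^ N := by omega
        have key : ((2 * i + 1 : ℕ) : ℝ) / 2 ^ (N + 1)
            = (((i : ℝ) / 2 ^ N) + ((i + 1 : ℕ) : ℝ) / 2 ^ N) / 2 := by
          push_cast
          rw [pow_succ]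
          field_simp
          ring
        rw [key]
        exact hmid _ _ (ih i hi1) (ih (i + 1) hi2)
  have hIccS : ∀ c : ℝ, c ∈ Set.Icc (0:ℝ) 1 → c ∈ S := by
    rintro c ⟨hc0, hc1⟩
    set d : ℕ → ℝ := fun N => (⌊c * 2 ^ N⌋₊ : ℝ) / 2 ^ N with hd
    have hdS : ∀ N, d N ∈ S := by
      intro N
      apply hdyadic
      calc ⌊c * 2 ^ N⌋₊ ≤ ⌊((2:ℝ) ^ N)⌋₊ := by
            apply Nat.floor_le_floor
            nlinarith [pow_pos (by norm_num : (0:ℝ) < 2) N]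
        _ = 2 ^ N := by
            rw [show ((2:ℝ) ^ N) = ((2 ^ N : ℕ) : ℝ) by push_cast; ring, Nat.floor_natCast]
    have htendsto : Filter.Tendsto d Filter.atTop (nhds c) := by
      have hpow : Filter.Tendsto (fun N : ℕ => ((2:ℝ) ^ N)⁻¹) Filter.atTop (nhds 0) := by
        simpa [Function.comp_def] using tendsto_inv_atTop_zero.comp
          (tendsto_pow_atTop_atTop_of_one_lt (by norm_num : (1:ℝ) < 2))
      have hlow : ∀ N, c - ((2:ℝ) ^ N)⁻¹ ≤ d N := by
        intro N
        have hpos : (0:ℝ) < 2 ^ N := pow_pos (by norm_num) N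
        have h2 : c * 2 ^ N < ⌊c * 2 ^ N⌋₊ + 1 := Nat.lt_floor_add_one _
        have h3 : ((2:ℝ) ^ N)⁻¹ * 2 ^ N = 1 := inv_mul_cancel₀ hpos.ne'
        have : c - ((2:ℝ) ^ N)⁻¹ < (⌊c * 2 ^ N⌋₊ : ℝ) / 2 ^ N := by
          rw [lt_div_iff₀ hpos, sub_mul]
          linarith
        exact this.le
      have hupp : ∀ N, d N ≤ c := by
        intro N
        have hpos : (0:ℝ) < 2 ^ N := pow_pos (by norm_num) N
        have h2 : (⌊c * 2 ^ N⌋₊ : ℝ) ≤ c * 2 ^ N :=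
          Nat.floor_le (by positivity)
        rw [hd, div_le_iff₀ hpos]
        simpa using h2
      have hlowtend : Filter.Tendsto (fun N : ℕ => c - ((2:ℝ) ^ N)⁻¹)
          Filter.atTop (nhds c) := by
        simpa using Filter.Tendsto.sub (tendsto_const_nhds (x := c)) hpow
      exact tendsto_of_tendsto_of_tendsto_of_le_of_le hlowtend tendsto_const_nhds hlow hupp
    exact hSclosed.mem_of_tendsto htendsto (Filter.Eventually.of_forall hdS)
  have hb' : b = 1 - a := by linarith
  have := hIccS a ⟨ha, by linarith⟩
  rcases this with ⟨_, hfin⟩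
  subst hb'
  simpa [smul_eq_mul] using hfin

/-- geodesic convexity of the operator-capacity objective.  For
`T(X) = Σⱼ Aⱼ·X·Aⱼᵀ` strictly positive, the function
`t ↦ log det(T(γ(t))) − log det(γ(t))` along the geodesic
`γ(t) = √P · exp(t·Q) · √P` is convex on `ℝ`. -/
theorem operator_capacity_objective_gconvex (n m : ℕ)
    (A : Fin m → Matrix (Fin n) (Fin n) ℝ)
    (hTpd : ∀ X : Matrix (Fin n) (Fin n) ℝ, X.PosDef →
      (∑ j, A j * X * (A j)ᵀ).PosDef)
    (P Q : Matrix (Fin n) (Fin n) ℝ) (hP : P.PosDef) (hQ : Q.IsSymm) :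
    ConvexOn ℝ Set.univ
      (fun t : ℝ =>
        Real.log
          (∑ j, A j * (hP.posSemidef.sqrt * NormedSpace.exp (t • Q) * hP.posSemidef.sqrt)
              * (A j)ᵀ).det
        - Real.log
            (hP.posSemidef.sqrt * NormedSpace.exp (t • Q) * hP.posSemidef.sqrt).det) := by
  set Sq := hP.posSemidef.sqrt with hSqdef
  set E : ℝ → Matrix (Fin n) (Fin n) ℝ := fun u => NormedSpace.exp (u • Q) with hEdef
  -- basic facts
  have hSymS : Sqᵀ = Sq := by
    have h : Sqᴴ = Sq := hP.posSemidef.posSemidef_sqrt.1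
    rwa [real_conjTranspose_eq_transpose] at h
  have hdetSq : Sq.det * Sq.det = P.det := by
    rw [← det_mul, hP.posSemidef.sqrt_mul_self]
  have hdetSne : Sq.det ≠ 0 := by
    intro h
    have := hP.det_pos
    rw [← hdetSq, h, mul_zero] at this
    exact lt_irrefl _ this
  have hEsymm : ∀ u, (E u)ᵀ = E u := by
    intro u
    rw [hEdef, ← Matrix.exp_transpose, transpose_smul, hQ.eq]
  have hEmul : ∀ u v, E u * E v = E (u + v) := by
    intro u v
    have hcomm : Commute (u • Q) (v • Q) := ((Commute.refl Q).smul_left u).smul_right v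
    simp only [hEdef]
    rw [add_smul]
    exact (Matrix.exp_add_of_commute _ _ hcomm).symm
  have hEdet : ∀ u, IsUnit (E u).det := by
    intro u
    apply (Matrix.isUnit_iff_isUnit_det _).mp
    simp only [hEdef]
    exact Matrix.isUnit_exp _
  have hγ : ∀ u, (Sq * E u * Sq).PosDef := by
    intro u
    have hBdet : IsUnit (Sq * E (u / 2)).det := by
      rw [det_mul]
      exact (isUnit_iff_ne_zero.mpr hdetSne).mul (hEdet _)
    have hform : (Sq * E (u / 2)) * (Sq * E (u / 2))ᵀ = Sq * E u * Sq := by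
      rw [transpose_mul, hSymS, hEsymm]
      calc Sq * E (u / 2) * (E (u / 2) * Sq)
          = Sq * (E (u / 2) * E (u / 2)) * Sq := by
            simp only [Matrix.mul_assoc]
        _ = Sq * E u * Sq := by rw [hEmul, show u / 2 + u / 2 = u by ring]
    rw [← hform]
    exact posDef_mul_transpose_self hBdet
  have hM : ∀ u, (∑ j, A j * (Sq * E u * Sq) * (A j)ᵀ).PosDef := fun u => hTpd _ (hγ u)
  apply convexOn_univ_of_continuous_of_midpoint
  · -- continuity
    have hcexp : Continuous E := by
      rw [hEdef]
      letI : SeminormedRing (Matrix (Fin n) (Fin n) ℝ) := Matrix.linftyOpSemiNormedRing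
      letI : NormedRing (Matrix (Fin n) (Fin n) ℝ) := Matrix.linftyOpNormedRing
      letI : NormedAlgebra ℝ (Matrix (Fin n) (Fin n) ℝ) := Matrix.linftyOpNormedAlgebra
      letI : NormedAlgebra ℚ (Matrix (Fin n) (Fin n) ℝ) := Matrix.linftyOpNormedAlgebra
      exact NormedSpace.exp_continuous.comp (continuous_id.smul continuous_const)
    have hγc : Continuous fun t => Sq * E t * Sq :=
      (continuous_const.matrix_mul hcexp).matrix_mul continuous_const
    have hMc : Continuous fun t => ∑ j, A j * (Sq * E t * Sq) * (A j)ᵀ :=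
      continuous_finset_sum _ fun j _ =>
        (continuous_const.matrix_mul hγc).matrix_mul continuous_const
    rw [continuous_iff_continuousAt]
    intro t
    refine ContinuousAt.sub ?_ ?_
    · exact ContinuousAt.comp (g := Real.log)
        (f := fun t => (∑ j, A j * (Sq * E t * Sq) * (A j)ᵀ).det) (x := t)
        (Real.continuousAt_log (hM t).det_pos.ne') (hMc.matrix_det.continuousAt)
    · exact ContinuousAt.comp (g := Real.log)
        (f := fun t => (Sq * E t * Sq).det) (x := t)
        (Real.continuousAt_log (hγ t).det_pos.ne') (hγc.matrix_det.continuousAt)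
  · -- midpoint inequality
    intro s t
    set C : ℝ → Matrix (Fin m × Fin n) (Fin n) ℝ :=
      fun u => Matrix.of fun p i => (E (u / 2) * Sq * (A p.1)ᵀ) p.2 i with hCdef
    have hE2 : ∀ (u v : ℝ) (X : Matrix (Fin n) (Fin n) ℝ),
        E (u / 2) * (E (v / 2) * X) = E ((u + v) / 2) * X := by
      intro u v X
      rw [← Matrix.mul_assoc, hEmul, show u / 2 + v / 2 = (u + v) / 2 by ring]
    have key : ∀ u v : ℝ, (C u)ᵀ * C v = ∑ j, A j * (Sq * E ((u + v) / 2) * Sq) * (A j)ᵀ := by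
      intro u v
      ext i i'
      rw [Matrix.mul_apply, Matrix.sum_apply]
      rw [Fintype.sum_prod_type]
      refine Finset.sum_congr rfl fun j _ => ?_
      have hAB : A j * (Sq * E ((u + v) / 2) * Sq) * (A j)ᵀ
          = (E (u / 2) * Sq * (A j)ᵀ)ᵀ * (E (v / 2) * Sq * (A j)ᵀ) := by
        rw [transpose_mul, transpose_mul, transpose_transpose, hSymS, hEsymm]
        simp only [Matrix.mul_assoc, hE2]
      rw [hAB, Matrix.mul_apply]
      refine Finset.sum_congr rfl fun k _ => ?_
      simp [hCdef, transpose_apply]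
    -- positive definiteness at the three relevant points
    have hMs := hM s
    have hMt := hM t
    have hMmid := hM ((s + t) / 2)
    have hCs : (C s)ᵀ * C s = ∑ j, A j * (Sq * E s * Sq) * (A j)ᵀ := by
      rw [key s s, show (s + s) / 2 = s by ring]
    have hCt : (C t)ᵀ * C t = ∑ j, A j * (Sq * E t * Sq) * (A j)ᵀ := by
      rw [key t t, show (t + t) / 2 = t by ring]
    have hXpd : ((C s)ᵀ * C s).PosDef := by rw [hCs]; exact hMs
    have hYpd : ((C t)ᵀ * C t).PosDef := by rw [hCt]; exact hMt
    have hcs := det_sq_le (C s) (C t) hXpd hYpd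
    rw [key s t, hCs, hCt] at hcs
    -- logs for the numerator part
    have hMmidpos : 0 < (∑ j, A j * (Sq * E ((s + t) / 2) * Sq) * (A j)ᵀ).det := hMmid.det_pos
    have hMspos : 0 < (∑ j, A j * (Sq * E s * Sq) * (A j)ᵀ).det := hMs.det_pos
    have hMtpos : 0 < (∑ j, A j * (Sq * E t * Sq) * (A j)ᵀ).det := hMt.det_pos
    have hlog1 : 2 * Real.log (∑ j, A j * (Sq * E ((s + t) / 2) * Sq) * (A j)ᵀ).det
        ≤ Real.log (∑ j, A j * (Sq * E s * Sq) * (A j)ᵀ).det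
          + Real.log (∑ j, A j * (Sq * E t * Sq) * (A j)ᵀ).det := by
      have h := Real.log_le_log (by positivity) hcs
      rw [Real.log_pow, Real.log_mul hMspos.ne' hMtpos.ne'] at h
      push_cast at h
      linarith
    -- the geodesic determinant term is exactly affine
    have hdγ : ∀ u, (Sq * E u * Sq).det = Sq.det * (E u).det * Sq.det := by
      intro u; rw [det_mul, det_mul]
    have hEmid : (E ((s + t) / 2)).det * (E ((s + t) / 2)).det = (E s).det * (E t).det := by
      rw [← det_mul, ← det_mul, hEmul, hEmul, show (s + t) / 2 + (s + t) / 2 = s + t by ring]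
    have hγmid : (Sq * E ((s + t) / 2) * Sq).det * (Sq * E ((s + t) / 2) * Sq).det
        = (Sq * E s * Sq).det * (Sq * E t * Sq).det := by
      rw [hdγ, hdγ, hdγ]
      linear_combination (Sq.det * Sq.det * Sq.det * Sq.det) * hEmid
    have hγspos : 0 < (Sq * E s * Sq).det := (hγ s).det_pos
    have hγtpos : 0 < (Sq * E t * Sq).det := (hγ t).det_pos
    have hγmidpos : 0 < (Sq * E ((s + t) / 2) * Sq).det := (hγ ((s + t) / 2)).det_pos
    have hlog2 : 2 * Real.log (Sq * E ((s + t) / 2) * Sq).det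
        = Real.log (Sq * E s * Sq).det + Real.log (Sq * E t * Sq).det := by
      have := congrArg Real.log hγmid
      rw [Real.log_mul hγmidpos.ne' hγmidpos.ne',
        Real.log_mul hγspos.ne' hγtpos.ne'] at this
      linarith
    simp only [hEdef] at hlog1 hlog2
    linarith
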